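/- Let n ≥ 2, let ξ ∈ ℝⁿ be regarded as the real 1-form Σ_j ξ_j dx^j, and let a^l ∈ Λ^l for l = 0,…,n. Then |Σ_{l=0}^n ((−1)^l ξ∧a^l + ξ∨a^l)|² = |ξ|² Σ_{l=0}^n |a^l|², where the norm on the left is the graded norm |u|² = ⟨u, ū⟩. In particular, for each l the cross terms vanish: ⟨ξ∧a^{l−1}, conj(ξ∨a^{l+1})⟩ = 0. -/
import Mathlib


noncomputable section

open MeasureTheory Finset

namespace EMPaper

/-- Points of `ℝⁿ`. -/
abbrev Pt (n : ℕ) := Fin n → ℝ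

/-- A graded element of the complexified exterior algebra `Λ ℝⁿ ⊗ ℂ`, encoded by its
coefficients on the basis monomials `dx^{α₁} ∧ ⋯ ∧ dx^{α_l}`, indexed by the set
`{α₁ < ⋯ < α_l} ⊆ Fin n`. -/
abbrev GF (n : ℕ) := Finset (Fin n) → ℂ

/-- A graded differential form on `ℝⁿ`. -/
abbrev Form (n : ℕ) := Pt n → GF n

variable {n : ℕ}

/-- The sign `(-1)^{#{(i,j) ∈ I × J : j < i}}` obtained when merging the increasing
enumerations of the disjoint sets `I` and `J`. -/
def msgn (I J : Finset (Fin n)) : ℂ :=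
  (-1 : ℂ) ^ (((I ×ˢ J).filter fun p => p.2 < p.1).card)

/-- The wedge (exterior) product. -/
def wedge (u v : GF n) : GF n := fun S =>
  ∑ I ∈ S.powerset, msgn I (S \ I) * u I * v (S \ I)

/-- The vee product, determined by `⟨w, v ∨ u⟩ = ⟨w ∧ v, u⟩`. -/
def vee (v u : GF n) : GF n := fun I =>
  ∑ J ∈ (univ \ I).powerset, msgn I J * v J * u (I ∪ J)

/-- The ℂ-bilinear (non-Hermitian) inner product for which the basis monomials are
orthonormal. -/
def ginner (u v : GF n) : ℂ := ∑ S : Finset (Fin n), u S * v S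

/-- Componentwise complex conjugation. -/
def gconj (u : GF n) : GF n := fun S => (starRingEnd ℂ) (u S)

/-- Projection onto the degree-`l` part. -/
def proj (l : ℕ) (u : GF n) : GF n := fun S => if S.card = l then u S else 0

/-- `u` is homogeneous of degree `l` (an element of `Λ^l`). -/
def IsGrade (l : ℕ) (u : GF n) : Prop := ∀ S : Finset (Fin n), S.card ≠ l → u S = 0

/-- The basis one-form `dx^j`. -/
def dxe (j : Fin n) : GF n := fun S => if S = {j} then 1 else 0

/-- The one-form with components `c j`. -/
def oneG (c : Fin n → ℂ) : GF n := fun S => ∑ j, if S = {j} then c j else 0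

/-- `Σ_l (-1)^l u^l`. -/
def altSign (u : GF n) : GF n := fun S => (-1 : ℂ) ^ S.card * u S

/-- Exterior derivative `du = Σ_j dx^j ∧ ∂_j u`, expressed in terms of the family of
partial derivatives `D j = ∂_j u` at a point. -/
def gd (D : Fin n → GF n) : GF n := fun S => ∑ j, wedge (dxe j) (D j) S

/-- Coderivative `δu = (-1)^l Σ_j dx^j ∨ ∂_j u` (degreewise on graded forms), expressed
in terms of the family of partial derivatives `D j = ∂_j u` at a point. -/
def gdel (D : Fin n → GF n) : GF n := fun S =>
  (-1 : ℂ) ^ (S.card + 1) * ∑ j, vee (dxe j) (D j) S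

/-- Classical partial derivative `∂_{x^j}` of a complex-valued function. -/
def pd (j : Fin n) (f : Pt n → ℂ) : Pt n → ℂ := fun x => fderiv ℝ f x (Pi.single j 1)

/-- Componentwise classical partial derivatives of a graded form. -/
def Dcl (φ : Form n) : Fin n → Form n := fun j x S => pd j (fun y => φ y S) x

/-- A test function: smooth and compactly supported. -/
def IsTest (φ : Pt n → ℂ) : Prop := ContDiff ℝ (⊤ : ℕ∞) φ ∧ HasCompactSupport φ

/-- A graded form all of whose components are test functions. -/
def TestForm (φ : Form n) : Prop := ∀ S : Finset (Fin n), IsTest fun x => φ x S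

/-- `f ∈ L²_loc(ℝⁿ)`. -/
def L2loc (f : Pt n → ℂ) : Prop :=
  AEStronglyMeasurable f (volume : Measure (Pt n)) ∧
    ∀ K : Set (Pt n), IsCompact K → IntegrableOn (fun x => ‖f x‖ ^ 2) K volume

/-- `g` is the weak `j`-th partial derivative of `f` on `ℝⁿ`. -/
def HasWeakPD (j : Fin n) (f g : Pt n → ℂ) : Prop :=
  ∀ φ : Pt n → ℂ, IsTest φ → ∫ x, g x * φ x = -∫ x, f x * pd j φ x

/-- All components of the graded form `w` belong to `H¹_loc(ℝⁿ)`, with weak partial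
derivatives given componentwise by the family `Dw`. -/
def H1locWith (w : Form n) (Dw : Fin n → Form n) : Prop :=
  (∀ S : Finset (Fin n), L2loc fun x => w x S) ∧
    (∀ (j : Fin n) (S : Finset (Fin n)),
      HasWeakPD j (fun x => w x S) fun x => Dw j x S) ∧
    ∀ (j : Fin n) (S : Finset (Fin n)), L2loc fun x => Dw j x S

section Statement11Aux

/-- sign for wedging `dx^j` into position within `S`. -/
def eps1 (j : Fin n) (S : Finset (Fin n)) : ℂ :=
  (-1 : ℂ) ^ (((S.erase j).filter fun i => i < j).card)

/-- sign `(-1)^{#{i ∈ I : j < i}}`. -/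
def eps2 (I : Finset (Fin n)) (j : Fin n) : ℂ :=
  (-1 : ℂ) ^ ((I.filter fun i => j < i).card)

lemma neg_one_pow_mul_self (k : ℕ) : ((-1 : ℂ)) ^ k * (-1) ^ k = 1 := by
  rw [← mul_pow]; norm_num

lemma msgn_singleton_left (j : Fin n) (J : Finset (Fin n)) :
    msgn {j} J = (-1 : ℂ) ^ ((J.filter fun i => i < j).card) := by
  unfold msgn
  congr 1
  rw [Finset.singleton_product, Finset.filter_map, Finset.card_map]
  rfl

lemma msgn_singleton_right (I : Finset (Fin n)) (j : Fin n) :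
    msgn I {j} = (-1 : ℂ) ^ ((I.filter fun i => j < i).card) := by
  unfold msgn
  congr 1
  rw [Finset.product_singleton, Finset.filter_map, Finset.card_map]
  rfl

lemma wedge_oneG (c : Fin n → ℂ) (u : GF n) (S : Finset (Fin n)) :
    wedge (oneG c) u S = ∑ j ∈ S, eps1 j S * c j * u (S.erase j) := by
  unfold wedge oneG
  have h1 : ∀ I ∈ S.powerset, msgn I (S \ I) * (∑ j, if I = {j} then c j else 0) * u (S \ I)
      = ∑ j, if I = {j} then msgn I (S \ I) * c j * u (S \ I) else 0 := by
    intro I _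
    rw [Finset.mul_sum, Finset.sum_mul]
    exact Finset.sum_congr rfl fun j _ => by split <;> simp
  rw [Finset.sum_congr rfl h1, Finset.sum_comm]
  have h2 : ∀ j : Fin n,
      (∑ I ∈ S.powerset, if I = {j} then msgn I (S \ I) * c j * u (S \ I) else 0)
      = if j ∈ S then eps1 j S * c j * u (S.erase j) else 0 := by
    intro j
    rw [Finset.sum_ite_eq' S.powerset ({j} : Finset (Fin n))]
    simp only [Finset.mem_powerset, Finset.singleton_subset_iff]
    split
    · rw [msgn_singleton_left, ← Finset.erase_eq]
      rfl
    · rfl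
  rw [Finset.sum_congr rfl fun j _ => h2 j, Finset.sum_ite_mem, Finset.univ_inter]

lemma vee_oneG (c : Fin n → ℂ) (u : GF n) (I : Finset (Fin n)) :
    vee (oneG c) u I = ∑ j ∈ Iᶜ, eps2 I j * c j * u (insert j I) := by
  unfold vee oneG
  have h1 : ∀ J ∈ (univ \ I).powerset, msgn I J * (∑ j, if J = {j} then c j else 0) * u (I ∪ J)
      = ∑ j, if J = {j} then msgn I J * c j * u (I ∪ J) else 0 := by
    intro J _
    rw [Finset.mul_sum, Finset.sum_mul]
    exact Finset.sum_congr rfl fun j _ => by split <;> simp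
  rw [Finset.sum_congr rfl h1, Finset.sum_comm]
  have h2 : ∀ j : Fin n,
      (∑ J ∈ (univ \ I).powerset, if J = {j} then msgn I J * c j * u (I ∪ J) else 0)
      = if j ∈ Iᶜ then eps2 I j * c j * u (insert j I) else 0 := by
    intro j
    rw [Finset.sum_ite_eq' (univ \ I).powerset ({j} : Finset (Fin n))]
    simp only [Finset.mem_powerset, Finset.singleton_subset_iff, Finset.mem_sdiff,
      Finset.mem_univ, true_and, Finset.mem_compl]
    split
    · rw [msgn_singleton_right, Finset.union_comm, ← Finset.insert_eq]
      rfl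
    · rfl
  rw [Finset.sum_congr rfl fun j _ => h2 j, Finset.sum_ite_mem, Finset.univ_inter]

lemma eps1_insert_self {j : Fin n} {I : Finset (Fin n)} (h : j ∉ I) :
    eps1 j (insert j I) = (-1 : ℂ) ^ I.card * eps2 I j := by
  have hfe : (I.filter fun i => ¬ i < j) = I.filter fun i => j < i := by
    apply Finset.filter_congr
    intro i hi
    have hne : i ≠ j := fun e => h (e ▸ hi)
    simp only [not_lt]
    exact ⟨fun h' => lt_of_le_of_ne h' (Ne.symm hne), fun h' => le_of_lt h'⟩
  have hab : ((I.filter fun i => i < j).card) + ((I.filter fun i => j < i).card) = I.card := by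
    rw [← hfe]
    exact Finset.card_filter_add_card_filter_not _
  unfold eps1 eps2
  rw [Finset.erase_insert h, ← hab, pow_add, mul_assoc, neg_one_pow_mul_self, mul_one]

lemma eps2_erase_self {j : Fin n} {S : Finset (Fin n)} (h : j ∈ S) :
    eps2 (S.erase j) j = -((-1 : ℂ) ^ S.card * eps1 j S) := by
  have h1 := eps1_insert_self (Finset.notMem_erase j S)
  rw [Finset.insert_erase h] at h1
  have hc : S.card = (S.erase j).card + 1 := (Finset.card_erase_add_one h).symm
  have hs := neg_one_pow_mul_self (S.erase j).card
  rw [h1, hc, pow_succ]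
  linear_combination (-(eps2 (S.erase j) j)) * hs

lemma e1i {j k : Fin n} {S : Finset (Fin n)} (hj : j ∉ S) (hne : j ≠ k) :
    eps1 k (insert j S) = (if j < k then (-1 : ℂ) else 1) * eps1 k S := by
  unfold eps1
  rw [Finset.erase_insert_of_ne hne, Finset.filter_insert]
  split
  · rw [Finset.card_insert_of_notMem
      (fun hm => hj (Finset.mem_of_mem_erase (Finset.mem_of_mem_filter _ hm))), pow_succ]
    ring
  · rw [one_mul]

lemma e2i {j k : Fin n} {I : Finset (Fin n)} (hj : j ∉ I) :
    eps2 (insert j I) k = (if k < j then (-1 : ℂ) else 1) * eps2 I k := by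
  unfold eps2
  rw [Finset.filter_insert]
  split
  · rw [Finset.card_insert_of_notMem (fun hm => hj (Finset.mem_of_mem_filter _ hm)), pow_succ]
    ring
  · rw [one_mul]

lemma sum_reindex (g : Finset (Fin n) → Fin n → ℂ) :
    ∑ S : Finset (Fin n), ∑ j ∈ S, g (S.erase j) j = ∑ I : Finset (Fin n), ∑ j ∈ Iᶜ, g I j := by
  rw [Finset.sum_sigma', Finset.sum_sigma']
  apply Finset.sum_nbij' (i := fun p => (⟨p.1.erase p.2, p.2⟩ : Σ _ : Finset (Fin n), Fin n))
    (j := fun p => (⟨insert p.2 p.1, p.2⟩ : Σ _ : Finset (Fin n), Fin n))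
  · intro p hp
    simp only [Finset.mem_sigma, Finset.mem_univ, true_and, Finset.mem_compl] at *
    exact Finset.notMem_erase _ _
  · intro p hp
    simp only [Finset.mem_sigma, Finset.mem_univ, true_and, Finset.mem_compl] at *
    exact Finset.mem_insert_self _ _
  · intro p hp
    simp only [Finset.mem_sigma, Finset.mem_univ, true_and] at hp
    simp [Finset.insert_erase hp]
  · intro p hp
    simp only [Finset.mem_sigma, Finset.mem_univ, true_and, Finset.mem_compl] at hp
    simp [Finset.erase_insert hp]
  · intro p hp
    rfl

lemma adj1 (c : Fin n → ℂ) (u v : GF n) :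
    ginner (wedge (oneG c) u) v = ginner (altSign u) (vee (oneG c) v) := by
  unfold ginner
  calc ∑ S : Finset (Fin n), wedge (oneG c) u S * v S
      = ∑ S : Finset (Fin n), ∑ j ∈ S,
          (fun I t => eps1 t (insert t I) * c t * u I * v (insert t I)) (S.erase j) j := by
        refine Finset.sum_congr rfl fun S _ => ?_
        rw [wedge_oneG, Finset.sum_mul]
        refine Finset.sum_congr rfl fun j hj => ?_
        simp only [Finset.insert_erase hj]
    _ = ∑ I : Finset (Fin n), ∑ j ∈ Iᶜ, eps1 j (insert j I) * c j * u I * v (insert j I) :=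
        sum_reindex (fun I t => eps1 t (insert t I) * c t * u I * v (insert t I))
    _ = ∑ S : Finset (Fin n), altSign u S * vee (oneG c) v S := by
        refine Finset.sum_congr rfl fun I _ => ?_
        rw [vee_oneG]
        simp only [altSign]
        rw [Finset.mul_sum]
        refine Finset.sum_congr rfl fun j hj => ?_
        rw [eps1_insert_self (Finset.mem_compl.mp hj)]
        ring

lemma adj2 (c : Fin n → ℂ) (u v : GF n) :
    ginner (vee (oneG c) u) v = -ginner (altSign u) (wedge (oneG c) v) := by
  unfold ginner
  calc ∑ I : Finset (Fin n), vee (oneG c) u I * v I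
      = ∑ I : Finset (Fin n), ∑ j ∈ Iᶜ,
          (fun K t => eps2 K t * c t * u (insert t K) * v K) I j := by
        refine Finset.sum_congr rfl fun I _ => ?_
        rw [vee_oneG, Finset.sum_mul]
    _ = ∑ S : Finset (Fin n), ∑ j ∈ S,
          (fun K t => eps2 K t * c t * u (insert t K) * v K) (S.erase j) j :=
        (sum_reindex (fun K t => eps2 K t * c t * u (insert t K) * v K)).symm
    _ = ∑ S : Finset (Fin n), -(altSign u S * wedge (oneG c) v S) := by
        refine Finset.sum_congr rfl fun S _ => ?_
        simp only [altSign]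
        rw [wedge_oneG, Finset.mul_sum, ← Finset.sum_neg_distrib]
        refine Finset.sum_congr rfl fun j hj => ?_
        simp only [Finset.insert_erase hj]
        rw [eps2_erase_self hj]
        ring
    _ = -∑ S : Finset (Fin n), altSign u S * wedge (oneG c) v S := by
        rw [Finset.sum_neg_distrib]

lemma eps1_mul_self (j : Fin n) (S : Finset (Fin n)) : eps1 j S * eps1 j S = 1 := by
  unfold eps1; exact neg_one_pow_mul_self _

lemma eps2_mul_self (I : Finset (Fin n)) (j : Fin n) : eps2 I j * eps2 I j = 1 := by
  unfold eps2; exact neg_one_pow_mul_self _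

lemma vee_vee (c : Fin n → ℂ) (u : GF n) (I : Finset (Fin n)) :
    vee (oneG c) (vee (oneG c) u) I = 0 := by
  have hF : vee (oneG c) (vee (oneG c) u) I
      = ∑ j ∈ Iᶜ, ∑ k ∈ Iᶜ.erase j,
          eps2 I j * c j * (eps2 (insert j I) k * c k * u (insert k (insert j I))) := by
    rw [vee_oneG]
    refine Finset.sum_congr rfl fun j hj => ?_
    rw [vee_oneG, Finset.compl_insert, Finset.mul_sum]
  rw [hF]
  set F : Fin n → Fin n → ℂ := fun j k =>
    eps2 I j * c j * (eps2 (insert j I) k * c k * u (insert k (insert j I))) with hFdef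
  have hanti : ∀ j ∈ Iᶜ, ∀ k ∈ Iᶜ.erase j, F j k = -F k j := by
    intro j hj k hk
    have hjI : j ∉ I := Finset.mem_compl.mp hj
    have hkI : k ∉ I := Finset.mem_compl.mp (Finset.mem_of_mem_erase hk)
    have hne : k ≠ j := Finset.ne_of_mem_erase hk
    simp only [hFdef]
    rw [e2i hjI, e2i hkI, Finset.insert_comm]
    rcases lt_or_gt_of_ne hne with h | h
    · rw [if_pos h, if_neg (asymm h)]; ring
    · rw [if_neg (asymm h), if_pos h]; ring
  have hmem : ∀ x y : Fin n, x ∈ Iᶜ ∧ y ∈ Iᶜ.erase x ↔ x ∈ Iᶜ.erase y ∧ y ∈ Iᶜ := by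
    intro x y
    simp only [Finset.mem_erase, Finset.mem_compl]
    constructor
    · rintro ⟨h1, h2, h3⟩; exact ⟨⟨Ne.symm h2, h1⟩, h3⟩
    · rintro ⟨⟨h1, h2⟩, h3⟩; exact ⟨h2, Ne.symm h1, h3⟩
  have key : (∑ j ∈ Iᶜ, ∑ k ∈ Iᶜ.erase j, F j k) = -∑ j ∈ Iᶜ, ∑ k ∈ Iᶜ.erase j, F j k := by
    conv_lhs => rw [Finset.sum_comm' hmem]
    have : ∀ y ∈ Iᶜ, ∀ x ∈ Iᶜ.erase y, F x y = -F y x := by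
      intro y hy x hx
      rw [hanti y hy x hx, neg_neg]
    calc (∑ y ∈ Iᶜ, ∑ x ∈ Iᶜ.erase y, F x y)
        = ∑ y ∈ Iᶜ, ∑ x ∈ Iᶜ.erase y, -F y x :=
          Finset.sum_congr rfl fun y hy => Finset.sum_congr rfl fun x hx => this y hy x hx
      _ = -∑ j ∈ Iᶜ, ∑ k ∈ Iᶜ.erase j, F j k := by
          rw [← Finset.sum_neg_distrib]
          exact Finset.sum_congr rfl fun y _ => by rw [Finset.sum_neg_distrib]
  have h2 : (2 : ℂ) * (∑ j ∈ Iᶜ, ∑ k ∈ Iᶜ.erase j, F j k) = 0 := by linear_combination key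
  exact (mul_eq_zero.mp h2).resolve_left two_ne_zero

lemma sign_exchange {j k : Fin n} {S : Finset (Fin n)} (hjS : j ∉ S) (hk : k ∈ S) :
    eps2 S j * eps1 k (insert j S) = eps1 k S * eps2 (S.erase k) j := by
  have hne : j ≠ k := fun e => hjS (e ▸ hk)
  have h2 := e2i (k := j) (Finset.notMem_erase k S)
  rw [Finset.insert_erase hk] at h2
  rw [e1i hjS hne, h2]
  split_ifs with h
  · ring
  · ring

lemma anticomm (c : Fin n → ℂ) (v : GF n) (S : Finset (Fin n)) :
    vee (oneG c) (wedge (oneG c) v) S - wedge (oneG c) (vee (oneG c) v) S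
      = (-1 : ℂ) ^ S.card * (∑ j, c j ^ 2) * v S := by
  have hA : vee (oneG c) (wedge (oneG c) v) S
      = (-1 : ℂ) ^ S.card * (∑ j ∈ Sᶜ, c j ^ 2) * v S
        + ∑ j ∈ Sᶜ, ∑ k ∈ S,
            eps2 S j * eps1 k (insert j S) * c j * c k * v (insert j (S.erase k)) := by
    have h1 : vee (oneG c) (wedge (oneG c) v) S
        = ∑ j ∈ Sᶜ, ((-1 : ℂ) ^ S.card * c j ^ 2 * v S
            + ∑ k ∈ S, eps2 S j * eps1 k (insert j S) * c j * c k * v (insert j (S.erase k))) := by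
      rw [vee_oneG]
      refine Finset.sum_congr rfl fun j hj => ?_
      have hjS : j ∉ S := Finset.mem_compl.mp hj
      rw [wedge_oneG, Finset.sum_insert hjS, Finset.erase_insert hjS, mul_add, Finset.mul_sum]
      congr 1
      · rw [eps1_insert_self hjS]
        linear_combination ((-1 : ℂ) ^ S.card * c j ^ 2 * v S) * eps2_mul_self S j
      · refine Finset.sum_congr rfl fun k hk => ?_
        have hne : j ≠ k := fun e => hjS (e ▸ hk)
        rw [Finset.erase_insert_of_ne hne]
        ring
    rw [h1, Finset.sum_add_distrib]
    congr 1
    rw [Finset.mul_sum, Finset.sum_mul]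
  have hB : wedge (oneG c) (vee (oneG c) v) S
      = -((-1 : ℂ) ^ S.card * (∑ k ∈ S, c k ^ 2) * v S)
        + ∑ k ∈ S, ∑ j ∈ Sᶜ,
            eps1 k S * eps2 (S.erase k) j * c k * c j * v (insert j (S.erase k)) := by
    have h1 : wedge (oneG c) (vee (oneG c) v) S
        = ∑ k ∈ S, (-((-1 : ℂ) ^ S.card * c k ^ 2 * v S)
            + ∑ j ∈ Sᶜ, eps1 k S * eps2 (S.erase k) j * c k * c j * v (insert j (S.erase k))) := by
      rw [wedge_oneG]
      refine Finset.sum_congr rfl fun k hk => ?_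
      have hkc : k ∉ Sᶜ := by simp [Finset.mem_compl, hk]
      rw [vee_oneG, Finset.compl_erase, Finset.sum_insert hkc, Finset.insert_erase hk,
        mul_add, Finset.mul_sum]
      congr 1
      · rw [eps2_erase_self hk]
        linear_combination (-((-1 : ℂ) ^ S.card * c k ^ 2 * v S)) * eps1_mul_self k S
      · refine Finset.sum_congr rfl fun j hj => ?_
        ring
    rw [h1, Finset.sum_add_distrib]
    congr 1
    · rw [Finset.sum_neg_distrib]
      congr 1
      rw [Finset.mul_sum, Finset.sum_mul]
  have hX : (∑ j ∈ Sᶜ, ∑ k ∈ S,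
        eps2 S j * eps1 k (insert j S) * c j * c k * v (insert j (S.erase k)))
      = ∑ k ∈ S, ∑ j ∈ Sᶜ,
        eps1 k S * eps2 (S.erase k) j * c k * c j * v (insert j (S.erase k)) := by
    rw [Finset.sum_comm]
    refine Finset.sum_congr rfl fun k hk => Finset.sum_congr rfl fun j hj => ?_
    have hjS : j ∉ S := Finset.mem_compl.mp hj
    have hse := sign_exchange hjS hk
    linear_combination (c j * c k * v (insert j (S.erase k))) * hse
  rw [hA, hB, hX]
  have hsum : (∑ k ∈ S, c k ^ 2) + (∑ j ∈ Sᶜ, c j ^ 2) = ∑ j, c j ^ 2 :=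
    Finset.sum_add_sum_compl S _
  linear_combination ((-1 : ℂ) ^ S.card * v S) * hsum

lemma energy (c : Fin n → ℂ) (u v : GF n) :
    ginner (wedge (oneG c) u) (wedge (oneG c) v) + ginner (vee (oneG c) u) (vee (oneG c) v)
      = (∑ j, c j ^ 2) * ginner u v := by
  rw [adj1, adj2]
  unfold ginner
  rw [← sub_eq_add_neg, ← Finset.sum_sub_distrib, Finset.mul_sum]
  refine Finset.sum_congr rfl fun S _ => ?_
  simp only [altSign]
  have h := anticomm c v S
  linear_combination ((-1 : ℂ) ^ S.card * u S) * h
    + ((∑ j, c j ^ 2) * u S * v S) * neg_one_pow_mul_self S.card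

lemma conj_neg_one_pow (k : ℕ) : (starRingEnd ℂ) ((-1 : ℂ) ^ k) = (-1) ^ k := by
  rw [map_pow, map_neg, map_one]

lemma conj_eps1 (j : Fin n) (S : Finset (Fin n)) :
    (starRingEnd ℂ) (eps1 j S) = eps1 j S := by
  unfold eps1; exact conj_neg_one_pow _

lemma conj_eps2 (I : Finset (Fin n)) (j : Fin n) :
    (starRingEnd ℂ) (eps2 I j) = eps2 I j := by
  unfold eps2; exact conj_neg_one_pow _

lemma gconj_wedge {c : Fin n → ℂ} (hc : ∀ j, (starRingEnd ℂ) (c j) = c j) (u : GF n) :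
    gconj (wedge (oneG c) u) = wedge (oneG c) (gconj u) := by
  funext S
  simp only [gconj]
  rw [wedge_oneG, wedge_oneG, map_sum]
  refine Finset.sum_congr rfl fun j hj => ?_
  rw [map_mul, map_mul, hc, conj_eps1]
  rfl

lemma gconj_vee {c : Fin n → ℂ} (hc : ∀ j, (starRingEnd ℂ) (c j) = c j) (u : GF n) :
    gconj (vee (oneG c) u) = vee (oneG c) (gconj u) := by
  funext S
  simp only [gconj]
  rw [vee_oneG, vee_oneG, map_sum]
  refine Finset.sum_congr rfl fun j hj => ?_
  rw [map_mul, map_mul, hc, conj_eps2]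
  rfl

lemma gconj_gconj (u : GF n) : gconj (gconj u) = u :=
  funext fun S => Complex.conj_conj _

lemma isGrade_gconj {l : ℕ} {u : GF n} (h : IsGrade l u) : IsGrade l (gconj u) :=
  fun S hS => by simp [gconj, h S hS]

lemma wedge_grade {l : ℕ} {c : Fin n → ℂ} {u : GF n} (h : IsGrade l u) :
    ∀ S : Finset (Fin n), S.card ≠ l + 1 → wedge (oneG c) u S = 0 := by
  intro S hS
  rw [wedge_oneG]
  refine Finset.sum_eq_zero fun j hj => ?_
  have hcard : (S.erase j).card ≠ l := fun he =>
    hS (by rw [← Finset.card_erase_add_one hj, he])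
  rw [h _ hcard, mul_zero]

lemma vee_grade {l : ℕ} {c : Fin n → ℂ} {u : GF n} (h : IsGrade l u) :
    ∀ S : Finset (Fin n), S.card + 1 ≠ l → vee (oneG c) u S = 0 := by
  intro S hS
  rw [vee_oneG]
  refine Finset.sum_eq_zero fun j hj => ?_
  have hcard : (insert j S).card ≠ l := by
    rw [Finset.card_insert_of_notMem (Finset.mem_compl.mp hj)]; exact hS
  rw [h _ hcard, mul_zero]

lemma ginner_eq_zero {u v : GF n} (h : ∀ S, u S = 0 ∨ v S = 0) : ginner u v = 0 := by
  unfold ginner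
  exact Finset.sum_eq_zero fun S _ => by rcases h S with h' | h' <;> simp [h']

lemma ginner_comm (u v : GF n) : ginner u v = ginner v u := by
  unfold ginner
  exact Finset.sum_congr rfl fun S _ => mul_comm _ _

lemma cross0 {c : Fin n → ℂ} (hc : ∀ j, (starRingEnd ℂ) (c j) = c j) (u w : GF n) :
    ginner (wedge (oneG c) u) (gconj (vee (oneG c) w)) = 0 := by
  rw [gconj_vee hc, adj1]
  unfold ginner
  exact Finset.sum_eq_zero fun S _ => by rw [vee_vee, mul_zero]

lemma gconj_add (x y : GF n) : gconj (x + y) = gconj x + gconj y := by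
  funext S
  simp [gconj]

lemma gconj_smul_pow (m : ℕ) (x : GF n) :
    gconj ((-1 : ℂ) ^ m • x) = (-1 : ℂ) ^ m • gconj x := by
  funext S
  simp only [gconj, Pi.smul_apply, smul_eq_mul, map_mul, conj_neg_one_pow]

lemma ginner_add_left (x y z : GF n) : ginner (x + y) z = ginner x z + ginner y z := by
  unfold ginner
  rw [← Finset.sum_add_distrib]
  exact Finset.sum_congr rfl fun S _ => by simp [add_mul]

lemma ginner_add_right (x y z : GF n) : ginner x (y + z) = ginner x y + ginner x z := by
  unfold ginner
  rw [← Finset.sum_add_distrib]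
  exact Finset.sum_congr rfl fun S _ => by simp [mul_add]

lemma ginner_smul_left (r : ℂ) (x z : GF n) : ginner (r • x) z = r * ginner x z := by
  unfold ginner
  rw [Finset.mul_sum]
  exact Finset.sum_congr rfl fun S _ => by simp [mul_assoc]

lemma ginner_smul_right (r : ℂ) (x z : GF n) : ginner x (r • z) = r * ginner x z := by
  unfold ginner
  rw [Finset.mul_sum]
  exact Finset.sum_congr rfl fun S _ => by simp; ring

lemma gconj_sum (s : Finset ℕ) (f : ℕ → GF n) :
    gconj (∑ l ∈ s, f l) = ∑ l ∈ s, gconj (f l) := by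
  funext S
  simp [gconj, Finset.sum_apply]

lemma ginner_sum_left (s : Finset ℕ) (f : ℕ → GF n) (v : GF n) :
    ginner (∑ l ∈ s, f l) v = ∑ l ∈ s, ginner (f l) v := by
  unfold ginner
  simp only [Finset.sum_apply, Finset.sum_mul]
  exact Finset.sum_comm

lemma ginner_sum_right (s : Finset ℕ) (u : GF n) (f : ℕ → GF n) :
    ginner u (∑ l ∈ s, f l) = ∑ l ∈ s, ginner u (f l) := by
  unfold ginner
  simp only [Finset.sum_apply, Finset.mul_sum]
  exact Finset.sum_comm

end Statement11Aux


/-- the symbol identity behind (A.5).  For `ξ ∈ ℝⁿ` regarded as a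
real 1-form and `a^l ∈ Λ^l` (`l = 0,…,n`):
`|Σ_l ((−1)^l ξ∧a^l + ξ∨a^l)|² = |ξ|² Σ_l |a^l|²`, and for each `l` the cross terms
vanish: `⟨ξ∧a^{l−1}, conj(ξ∨a^{l+1})⟩ = 0`. -/
theorem statement11 (hn : 2 ≤ n) (ξ : Fin n → ℝ) (a : ℕ → GF n)
    (ha : ∀ l ≤ n, IsGrade l (a l)) :
    ginner
        (∑ l ∈ Finset.range (n + 1),
          ((-1 : ℂ) ^ l • wedge (oneG fun j => (ξ j : ℂ)) (a l)
            + vee (oneG fun j => (ξ j : ℂ)) (a l)))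
        (gconj (∑ l ∈ Finset.range (n + 1),
          ((-1 : ℂ) ^ l • wedge (oneG fun j => (ξ j : ℂ)) (a l)
            + vee (oneG fun j => (ξ j : ℂ)) (a l))))
      = ((∑ j, ξ j ^ 2 : ℝ) : ℂ)
          * ∑ l ∈ Finset.range (n + 1), ginner (a l) (gconj (a l)) ∧
    ∀ l : ℕ, 1 ≤ l → l + 1 ≤ n →
      ginner (wedge (oneG fun j => (ξ j : ℂ)) (a (l - 1)))
        (gconj (vee (oneG fun j => (ξ j : ℂ)) (a (l + 1)))) = 0 := by
  have hc : ∀ j : Fin n, (starRingEnd ℂ) ((fun j => ((ξ j : ℂ))) j) = (fun j => ((ξ j : ℂ))) j :=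
    fun j => Complex.conj_ofReal _
  have hle : ∀ l ∈ Finset.range (n + 1), l ≤ n := fun l hl =>
    Nat.lt_succ_iff.mp (Finset.mem_range.mp hl)
  constructor
  · rw [gconj_sum, ginner_sum_left]
    have h1 : ∀ l ∈ Finset.range (n + 1),
        ginner ((-1 : ℂ) ^ l • wedge (oneG fun j => (ξ j : ℂ)) (a l)
            + vee (oneG fun j => (ξ j : ℂ)) (a l))
          (∑ m ∈ Finset.range (n + 1),
            gconj ((-1 : ℂ) ^ m • wedge (oneG fun j => (ξ j : ℂ)) (a m)
              + vee (oneG fun j => (ξ j : ℂ)) (a m)))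
        = (∑ j, ((ξ j : ℂ)) ^ 2) * ginner (a l) (gconj (a l)) := by
      intro l hl
      rw [ginner_sum_right]
      have h2 : ∀ m ∈ Finset.range (n + 1),
          ginner ((-1 : ℂ) ^ l • wedge (oneG fun j => (ξ j : ℂ)) (a l)
              + vee (oneG fun j => (ξ j : ℂ)) (a l))
            (gconj ((-1 : ℂ) ^ m • wedge (oneG fun j => (ξ j : ℂ)) (a m)
              + vee (oneG fun j => (ξ j : ℂ)) (a m)))
          = if m = l then (∑ j, ((ξ j : ℂ)) ^ 2) * ginner (a l) (gconj (a l)) else 0 := by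
        intro m hm
        have hWV : ginner (wedge (oneG fun j => (ξ j : ℂ)) (a l))
            (gconj (vee (oneG fun j => (ξ j : ℂ)) (a m))) = 0 := cross0 hc _ _
        have hVW : ginner (vee (oneG fun j => (ξ j : ℂ)) (a l))
            (gconj (wedge (oneG fun j => (ξ j : ℂ)) (a m))) = 0 := by
          rw [ginner_comm, gconj_wedge hc]
          have hv : vee (oneG fun j => (ξ j : ℂ)) (a l)
              = gconj (vee (oneG fun j => (ξ j : ℂ)) (gconj (a l))) := by
            rw [gconj_vee hc, gconj_gconj]
          rw [hv]
          exact cross0 hc _ _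
        rw [gconj_add, gconj_smul_pow, ginner_add_left, ginner_add_right, ginner_add_right,
          ginner_smul_left, ginner_smul_left, ginner_smul_right, ginner_smul_right,
          hWV, hVW]
        by_cases hlm : m = l
        · subst hlm
          rw [if_pos rfl, gconj_wedge hc, gconj_vee hc]
          have hen := energy (fun j => ((ξ j : ℂ))) (a m) (gconj (a m))
          linear_combination hen
            + (ginner (wedge (oneG fun j => ((ξ j : ℂ))) (a m))
                (wedge (oneG fun j => ((ξ j : ℂ))) (gconj (a m)))) * neg_one_pow_mul_self m
        · rw [if_neg hlm]
          have hWW : ginner (wedge (oneG fun j => (ξ j : ℂ)) (a l))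
              (gconj (wedge (oneG fun j => (ξ j : ℂ)) (a m))) = 0 := by
            rw [gconj_wedge hc]
            apply ginner_eq_zero
            intro S
            by_cases hS : S.card = l + 1
            · right
              refine wedge_grade (isGrade_gconj (ha m (hle m hm))) S ?_
              rw [hS]
              exact fun e => hlm (Nat.succ_injective e).symm
            · left
              exact wedge_grade (ha l (hle l hl)) S hS
          have hVV : ginner (vee (oneG fun j => (ξ j : ℂ)) (a l))
              (gconj (vee (oneG fun j => (ξ j : ℂ)) (a m))) = 0 := by
            rw [gconj_vee hc]
            apply ginner_eq_zero
            intro S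
            by_cases hS : S.card + 1 = l
            · right
              refine vee_grade (isGrade_gconj (ha m (hle m hm))) S ?_
              rw [hS]
              exact fun e => hlm e.symm
            · left
              exact vee_grade (ha l (hle l hl)) S hS
          rw [hWW, hVV]
          ring
      rw [Finset.sum_congr rfl h2, Finset.sum_ite_eq' (Finset.range (n + 1)) l, if_pos hl]
    rw [Finset.sum_congr rfl h1, ← Finset.mul_sum]
    congr 1
    push_cast
    ring
  · intro l _ _
    exact cross0 hc _ _

end EMPaper
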